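/- Let A, B, C, D, E be integers, and let P, Q ∈ ℤ[X] be polynomials such that P has degree n ≥ 2 and leading coefficient 1 or −1, and Q is nonzero of degree at most n − 2. Let x ∈ ℂ with Q(x) ≠ 0, set y = −P(x)/Q(x), and suppose that y² = x³ + A·x·y + B·x² + C·y + D·x + E. Then x is a root of a monic polynomial of degree 2n with integer coefficients; in particular x is an algebraic integer, y is an algebraic integer, y lies in the subfield ℚ(x) of ℂ generated by x over ℚ, and the discriminant (A·x + C)² + 4·(x³ + B·x² + D·x + E) is the square of an element of ℚ(x). -/

import Mathlib

/-- If `P, Q ∈ ℤ[X]` with `P` of degree `n ≥ 2` and leading coefficient `±1`, `Q` nonzero of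
degree at most `n - 2`, and `x ∈ ℂ` with `Q(x) ≠ 0`, `y = -P(x)/Q(x)` and
`y² = x³ + A x y + B x² + C y + D x + E`, then `x` is a root of a monic integer polynomial
of degree `2n`; in particular `x` and `y` are algebraic integers, `y ∈ ℚ(x)`, and the
discriminant `(A x + C)² + 4 (x³ + B x² + D x + E)` is the square of an element of `ℚ(x)`. -/
theorem algebraic_integrality_from_modular_polynomial
    (A B C D E : ℤ) (P Q : Polynomial ℤ) (n : ℕ) (hn : 2 ≤ n)
    (hPdeg : P.natDegree = n) (hPlead : P.leadingCoeff = 1 ∨ P.leadingCoeff = -1)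
    (hQne : Q ≠ 0) (hQdeg : Q.natDegree ≤ n - 2)
    (x y : ℂ) (hQx : Polynomial.aeval x Q ≠ 0)
    (hy : y = -(Polynomial.aeval x P) / (Polynomial.aeval x Q))
    (hcubic : y ^ 2 = x ^ 3 + (A : ℂ) * x * y + (B : ℂ) * x ^ 2 + (C : ℂ) * y
      + (D : ℂ) * x + (E : ℂ)) :
    (∃ f : Polynomial ℤ, f.Monic ∧ f.natDegree = 2 * n ∧ Polynomial.aeval x f = 0) ∧
    IsIntegral ℤ x ∧ IsIntegral ℤ y ∧
    y ∈ IntermediateField.adjoin ℚ ({x} : Set ℂ) ∧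
    ∃ w ∈ IntermediateField.adjoin ℚ ({x} : Set ℂ),
      ((A : ℂ) * x + (C : ℂ)) ^ 2
        + 4 * (x ^ 3 + (B : ℂ) * x ^ 2 + (D : ℂ) * x + (E : ℂ)) = w ^ 2 := by
  have hyQ : y * Polynomial.aeval x Q = -(Polynomial.aeval x P) := by
    rw [hy]; field_simp
  -- the auxiliary polynomials
  set L : Polynomial ℤ := Polynomial.C A * Polynomial.X + Polynomial.C C with hL
  set R3 : Polynomial ℤ := Polynomial.X ^ 3 + Polynomial.C B * Polynomial.X ^ 2
    + Polynomial.C D * Polynomial.X + Polynomial.C E with hR3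
  set g : Polynomial ℤ := L * P * Q - R3 * Q ^ 2 with hg
  set f : Polynomial ℤ := P ^ 2 + g with hf
  -- degree bounds
  have hLdeg : L.natDegree ≤ 1 := by rw [hL]; compute_degree
  have hR3deg : R3.natDegree ≤ 3 := by rw [hR3]; compute_degree
  have hP2lead : (P ^ 2).leadingCoeff = 1 := by
    rw [Polynomial.leadingCoeff_pow]
    rcases hPlead with h | h <;> rw [h] <;> ring
  have hP2monic : (P ^ 2).Monic := hP2lead
  have hP2deg : (P ^ 2).natDegree = 2 * n := by
    rw [Polynomial.natDegree_pow, hPdeg]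
  have hgdeg : g.natDegree < (P ^ 2).natDegree := by
    rw [hP2deg]
    refine lt_of_le_of_lt (Polynomial.natDegree_sub_le _ _) ?_
    have h1 : (L * P * Q).natDegree ≤ 1 + n + (n - 2) := by
      refine le_trans (Polynomial.natDegree_mul_le) ?_
      refine add_le_add (le_trans (Polynomial.natDegree_mul_le) ?_) hQdeg
      exact add_le_add hLdeg (le_of_eq hPdeg)
    have h2 : (R3 * Q ^ 2).natDegree ≤ 3 + 2 * (n - 2) := by
      refine le_trans (Polynomial.natDegree_mul_le) ?_
      refine add_le_add hR3deg ?_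
      rw [Polynomial.natDegree_pow]; omega
    have : max (L * P * Q).natDegree (R3 * Q ^ 2).natDegree < 2 * n := by
      rw [max_lt_iff]; omega
    exact this
  have hfmonic : f.Monic := hP2monic.add_of_left (Polynomial.degree_lt_degree hgdeg)
  have hfdeg : f.natDegree = 2 * n := by
    rw [hf, Polynomial.natDegree_add_eq_left_of_natDegree_lt hgdeg, hP2deg]
  have hfx : Polynomial.aeval x f = 0 := by
    have hPx : Polynomial.aeval x P = -(y * Polynomial.aeval x Q) := by
      rw [hyQ]; ring
    simp only [hf, hg, hL, hR3, map_add, map_sub, map_mul, map_pow, Polynomial.aeval_X,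
      Polynomial.aeval_C, hPx, eq_intCast, map_intCast]
    push_cast
    linear_combination (Polynomial.aeval x Q) ^ 2 * hcubic
  have hxint : IsIntegral ℤ x := ⟨f, hfmonic, hfx⟩
  -- y is integral
  have hyint : IsIntegral ℤ y := by
    set S := integralClosure ℤ ℂ
    have ha : ((A : ℂ) * x + (C : ℂ)) ∈ S := by
      exact Subalgebra.add_mem _ (Subalgebra.mul_mem _ (Subalgebra.intCast_mem _ _) hxint)
        (Subalgebra.intCast_mem _ _)
    have hb : (x ^ 3 + (B : ℂ) * x ^ 2 + (D : ℂ) * x + (E : ℂ)) ∈ S := by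
      refine Subalgebra.add_mem _ (Subalgebra.add_mem _ (Subalgebra.add_mem _ ?_ ?_) ?_) ?_
      · exact Subalgebra.pow_mem _ hxint _
      · exact Subalgebra.mul_mem _ (Subalgebra.intCast_mem _ _) (Subalgebra.pow_mem _ hxint _)
      · exact Subalgebra.mul_mem _ (Subalgebra.intCast_mem _ _) hxint
      · exact Subalgebra.intCast_mem _ _
    set a : S := ⟨_, ha⟩ with hadef
    set b : S := ⟨_, hb⟩ with hbdef
    have hyS : IsIntegral S y := by
      refine ⟨Polynomial.X ^ 2 + (Polynomial.C (-a) * Polynomial.X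
        + Polynomial.C (-b)), ?_, ?_⟩
      · refine Polynomial.monic_X_pow_add ?_
        exact lt_of_le_of_lt Polynomial.degree_linear_le (by norm_num)
      · simp only [Polynomial.eval₂_add, Polynomial.eval₂_pow, Polynomial.eval₂_X,
          Polynomial.eval₂_mul, Polynomial.eval₂_C, Polynomial.eval₂_neg]
        have h1 : (algebraMap S ℂ) (-a) = -((A : ℂ) * x + (C : ℂ)) := rfl
        have h2 : (algebraMap S ℂ) (-b)
            = -(x ^ 3 + (B : ℂ) * x ^ 2 + (D : ℂ) * x + (E : ℂ)) := rfl
        rw [h1, h2]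
        linear_combination hcubic
    exact isIntegral_trans y hyS
  -- y ∈ ℚ(x)
  set K := IntermediateField.adjoin ℚ ({x} : Set ℂ) with hK
  have hxK : x ∈ K := IntermediateField.subset_adjoin ℚ _ (Set.mem_singleton x)
  set xK : K := ⟨x, hxK⟩ with hxKdef
  have haev : ∀ p : Polynomial ℤ, Polynomial.aeval x p
      = algebraMap K ℂ (Polynomial.aeval xK (p.map (algebraMap ℤ ℚ))) := by
    intro p
    rw [← Polynomial.aeval_algebraMap_apply, Polynomial.aeval_map_algebraMap]
    rfl
  set yK : K := -(Polynomial.aeval xK (P.map (algebraMap ℤ ℚ)))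
    / (Polynomial.aeval xK (Q.map (algebraMap ℤ ℚ))) with hyK
  have hyval : y = algebraMap K ℂ yK := by
    rw [hy, hyK, map_div₀, map_neg, ← haev, ← haev]
  have hyinK : y ∈ K := by rw [hyval]; exact (yK).2
  refine ⟨⟨f, hfmonic, hfdeg, hfx⟩, hxint, hyint, hyinK, ?_⟩
  refine ⟨2 * y - ((A : ℂ) * x + (C : ℂ)), ?_, ?_⟩
  · have hint : ∀ m : ℤ, ((m : ℂ) ∈ K) := fun m => intCast_mem K m
    have h2 : (2 : ℂ) ∈ K := by
      have := hint 2; norm_num at this ⊢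
    exact sub_mem (mul_mem h2 hyinK) (add_mem (mul_mem (hint A) hxK) (hint C))
  · linear_combination -4 * hcubic
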